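/- Let α > 1, let P be a finite set of points on the circle S¹ of circumference 1 (the quotient ℝ/ℤ with its arc-length metric), and let s ∈ P be the source. Then there exists a map φ : P → ℝ with φ(s) = 0 such that dist_{S¹}(p,q) ≤ |φ(p) − φ(q)| for all p, q ∈ P, and such that the infimum of cost_α over all feasible range assignments for P on the circle (with source s) equals the infimum of cost_α over all feasible range assignments for the image φ(P) ⊂ ℝ with the Euclidean distance (with source 0). (That is, an optimal range assignment on S¹ can always be obtained by cutting the circle at an appropriate point and solving the resulting instance in ℝ¹.) -/

import Mathlib

open Finset

attribute [local instance] Classical.propDecidable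

/-- A range assignment `ρ` for a finite point set `P` with source `s` is *feasible* if it is
nonnegative on `P` and every point of `P` is reachable from `s` via a sequence of points of `P`
in which each step is within the range of its starting point. -/
def Feasible {X : Type*} [MetricSpace X] (P : Finset X) (s : X) (ρ : X → ℝ) : Prop :=
  (∀ p ∈ P, 0 ≤ ρ p) ∧
  ∀ p ∈ P, ∃ (m : ℕ) (f : ℕ → X), f 0 = s ∧ f m = p ∧ (∀ i ≤ m, f i ∈ P) ∧
    ∀ i < m, dist (f i) (f (i + 1)) ≤ ρ (f i)

/-- The cost `∑_{p ∈ P} ρ(p)^α` of a range assignment. -/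
noncomputable def cost {X : Type*} (α : ℝ) (P : Finset X) (ρ : X → ℝ) : ℝ :=
  ∑ p ∈ P, ρ p ^ α

/-- The optimal broadcast cost: the infimum of `cost α P ρ` over feasible `ρ`. -/
noncomputable def opt {X : Type*} [MetricSpace X] (α : ℝ) (P : Finset X) (s : X) : ℝ :=
  sInf {c : ℝ | ∃ ρ : X → ℝ, Feasible P s ρ ∧ cost α P ρ = c}

namespace CutCircle

local notation "X" => AddCircle (1:ℝ)

/-- A lift of an element of the circle of minimal absolute value. -/
noncomputable def dlift (z : X) : ℝ :=
  (QuotientAddGroup.mk_surjective z).choose -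
    round (QuotientAddGroup.mk_surjective z).choose

lemma dlift_coe (z : X) : ((dlift z : ℝ) : X) = z := by
  have h : ((QuotientAddGroup.mk_surjective z).choose : X) = z :=
    (QuotientAddGroup.mk_surjective z).choose_spec
  rw [dlift, AddCircle.coe_sub, h]
  have : ((round (QuotientAddGroup.mk_surjective z).choose : ℝ) : X) = 0 := by
    rw [AddCircle.coe_eq_zero_iff]
    exact ⟨round (QuotientAddGroup.mk_surjective z).choose, by simp⟩
  rw [this, sub_zero]

lemma abs_dlift (z : X) : |dlift z| = ‖z‖ := by
  conv_rhs => rw [← (QuotientAddGroup.mk_surjective z).choose_spec]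
  rw [AddCircle.norm_eq, dlift]
  norm_num

lemma norm_coe_le (a : ℝ) : ‖(a : X)‖ ≤ |a| := by
  simpa using QuotientAddGroup.norm_mk_le_norm (S := AddSubgroup.zmultiples (1:ℝ)) (m := a)

/-- The basic distance bound: the circle distance is at most the distance of any lifts. -/
lemma dist_le_of_coe {p q : X} {a b : ℝ} (ha : (a : X) = p) (hb : (b : X) = q) :
    dist p q ≤ |a - b| := by
  rw [dist_eq_norm, ← ha, ← hb, ← AddCircle.coe_sub]
  exact norm_coe_le _

variable (P : Finset X) (s : X) (ρ : X → ℝ)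

/-- `(RY P s ρ n).1` is the set of points reachable from `s` in at most `n` hops;
`(RY P s ρ n).2` assigns real "unrolled" coordinates to reached points. -/
noncomputable def RY : ℕ → Finset X × (X → ℝ)
  | 0 => ({s}, fun _ => 0)
  | n + 1 =>
      ((RY n).1 ∪ P.filter (fun p => ∃ q ∈ (RY n).1, dist q p ≤ ρ q),
       fun p =>
         if p ∈ (RY n).1 then (RY n).2 p
         else if h : ∃ q ∈ (RY n).1, dist q p ≤ ρ q then
           (RY n).2 h.choose + dlift (p - h.choose)
         else 0)

variable {P s ρ}

lemma R_succ (n : ℕ) :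
    (RY P s ρ (n+1)).1 =
      (RY P s ρ n).1 ∪ P.filter (fun p => ∃ q ∈ (RY P s ρ n).1, dist q p ≤ ρ q) := rfl

lemma Y_succ (n : ℕ) (p : X) :
    (RY P s ρ (n+1)).2 p =
      if p ∈ (RY P s ρ n).1 then (RY P s ρ n).2 p
      else if h : ∃ q ∈ (RY P s ρ n).1, dist q p ≤ ρ q then
        (RY P s ρ n).2 h.choose + dlift (p - h.choose)
      else 0 := rfl

lemma s_mem_R (n : ℕ) : s ∈ (RY P s ρ n).1 := by
  induction n with
  | zero => simp [RY]
  | succ n ih => rw [R_succ]; exact Finset.mem_union_left _ ih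

lemma R_subset_P (hs : s ∈ P) (n : ℕ) : (RY P s ρ n).1 ⊆ P := by
  induction n with
  | zero => simpa [RY] using hs
  | succ n ih =>
      rw [R_succ]
      exact Finset.union_subset ih (Finset.filter_subset _ _)

lemma R_mono {n m : ℕ} (h : n ≤ m) : (RY P s ρ n).1 ⊆ (RY P s ρ m).1 := by
  induction m, h using Nat.le_induction with
  | base => exact subset_rfl
  | succ m _ ih =>
      refine ih.trans ?_
      rw [R_succ]
      exact Finset.subset_union_left

lemma Y_stable {n m : ℕ} (h : n ≤ m) {p : X} (hp : p ∈ (RY P s ρ n).1) :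
    (RY P s ρ m).2 p = (RY P s ρ n).2 p := by
  induction m, h using Nat.le_induction with
  | base => rfl
  | succ m hm ih =>
      rw [Y_succ, if_pos (R_mono hm hp), ih]

lemma Y_coe : ∀ {n : ℕ} {p : X}, p ∈ (RY P s ρ n).1 →
    (((RY P s ρ n).2 p : ℝ) : X) = p - s := by
  intro n
  induction n with
  | zero =>
      intro p hp
      have : p = s := by simpa [RY] using hp
      subst this
      show ((0:ℝ) : X) = p - p
      simp
  | succ n ih =>
      intro p hp
      by_cases h : p ∈ (RY P s ρ n).1
      · rw [Y_succ, if_pos h]; exact ih h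
      · rw [R_succ, Finset.mem_union] at hp
        rcases hp with hp | hp
        · exact absurd hp h
        · rw [Finset.mem_filter] at hp
          obtain ⟨hpP, hex⟩ := hp
          rw [Y_succ, if_neg h, dif_pos hex]
          have hq := hex.choose_spec
          rw [AddCircle.coe_add, ih hq.1, dlift_coe]
          abel

variable (P s ρ) in
/-- The cutting map. -/
noncomputable def phiF : X → ℝ := fun p =>
  if h : ∃ n, p ∈ (RY P s ρ n).1 then (RY P s ρ (Nat.find h)).2 p else 0

lemma phiF_eq {m : ℕ} {p : X} (hp : p ∈ (RY P s ρ m).1) :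
    phiF P s ρ p = (RY P s ρ m).2 p := by
  have h : ∃ n, p ∈ (RY P s ρ n).1 := ⟨m, hp⟩
  rw [phiF, dif_pos h]
  have h1 : Nat.find h ≤ m := Nat.find_le hp
  rw [Y_stable h1 (Nat.find_spec h)]

lemma phiF_s : phiF P s ρ s = 0 := by
  rw [phiF_eq (s_mem_R 0)]; rfl

lemma phiF_coe {m : ℕ} {p : X} (hp : p ∈ (RY P s ρ m).1) :
    ((phiF P s ρ p : ℝ) : X) = p - s := by
  rw [phiF_eq hp]; exact Y_coe hp

/-- A feasible path certifies reachability. -/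
lemma path_mem_R (m : ℕ) (f : ℕ → X) (h0 : f 0 = s) (hmem : ∀ i ≤ m, f i ∈ P)
    (hstep : ∀ i < m, dist (f i) (f (i + 1)) ≤ ρ (f i)) :
    f m ∈ (RY P s ρ m).1 := by
  induction m with
  | zero => simp [RY, h0]
  | succ m ih =>
      have hfm : f m ∈ (RY P s ρ m).1 :=
        ih (fun i hi => hmem i (hi.trans (Nat.le_succ m)))
          (fun i hi => hstep i (hi.trans (Nat.lt_succ_self m)))
      rw [R_succ, Finset.mem_union, Finset.mem_filter]
      exact Or.inr ⟨hmem (m+1) le_rfl, ⟨f m, hfm, hstep m (Nat.lt_succ_self m)⟩⟩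

lemma reached (hF : Feasible P s ρ) {p : X} (hp : p ∈ P) :
    ∃ n, p ∈ (RY P s ρ n).1 := by
  obtain ⟨m, f, h0, hm, hmem, hstep⟩ := hF.2 p hp
  exact ⟨m, hm ▸ path_mem_R m f h0 hmem hstep⟩

lemma phiF_coe' (hF : Feasible P s ρ) {p : X} (hp : p ∈ P) :
    ((phiF P s ρ p : ℝ) : X) = p - s := by
  obtain ⟨n, hn⟩ := reached hF hp
  exact phiF_coe hn

lemma phiF_inj (hF : Feasible P s ρ) {p q : X} (hp : p ∈ P) (hq : q ∈ P)
    (h : phiF P s ρ p = phiF P s ρ q) : p = q := by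
  have h1 := phiF_coe' hF hp
  have h2 := phiF_coe' hF hq
  rw [h, h2] at h1
  exact (sub_left_inj.mp h1).symm

lemma phiF_dist (hF : Feasible P s ρ) {p q : X} (hp : p ∈ P) (hq : q ∈ P) :
    dist p q ≤ |phiF P s ρ p - phiF P s ρ q| := by
  have h1 := phiF_coe' hF hp
  have h2 := phiF_coe' hF hq
  have : dist p q = dist (p - s) (q - s) := (dist_sub_right p q s).symm
  rw [this]
  exact dist_le_of_coe h1 h2

variable (P s ρ) in
/-- The induced range assignment on the real line. -/
noncomputable def sigF : ℝ → ℝ := fun x =>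
  if h : ∃ p, p ∈ P ∧ phiF P s ρ p = x then ρ h.choose else 0

lemma sigF_eq (hF : Feasible P s ρ) {p : X} (hp : p ∈ P) :
    sigF P s ρ (phiF P s ρ p) = ρ p := by
  have h : ∃ q, q ∈ P ∧ phiF P s ρ q = phiF P s ρ p := ⟨p, hp, rfl⟩
  rw [sigF, dif_pos h]
  have hq := h.choose_spec
  rw [phiF_inj hF hq.1 hp hq.2]

/-- Unrolled paths are feasible on the line. -/
lemma line_path (hs : s ∈ P) (hF : Feasible P s ρ) :
    ∀ {n : ℕ} {p : X}, p ∈ (RY P s ρ n).1 →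
    ∃ (m : ℕ) (f : ℕ → ℝ), f 0 = 0 ∧ f m = phiF P s ρ p ∧
      (∀ i ≤ m, f i ∈ P.image (phiF P s ρ)) ∧
      ∀ i < m, dist (f i) (f (i + 1)) ≤ sigF P s ρ (f i) := by
  intro n
  induction n with
  | zero =>
      intro p hp
      have hps : s = p := (by simpa [RY] using hp : p = s).symm
      subst hps
      exact ⟨0, fun _ => 0, rfl, phiF_s.symm,
        fun i _ => Finset.mem_image.mpr ⟨s, hs, phiF_s⟩,
        fun i hi => absurd hi (Nat.not_lt_zero i)⟩
  | succ n ih =>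
      intro p hp
      by_cases h : p ∈ (RY P s ρ n).1
      · exact ih h
      · rw [R_succ, Finset.mem_union] at hp
        rcases hp with hp | hp
        · exact absurd hp h
        rw [Finset.mem_filter] at hp
        obtain ⟨hpP, hex⟩ := hp
        have hq := hex.choose_spec
        set q := hex.choose with hqdef
        obtain ⟨m, f, hf0, hfm, hfmem, hfstep⟩ := ih hq.1
        have hqP : q ∈ P := R_subset_P hs n hq.1
        have hpR : p ∈ (RY P s ρ (n+1)).1 := by
          rw [R_succ, Finset.mem_union, Finset.mem_filter]
          exact Or.inr ⟨hpP, hex⟩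
        have hphip : phiF P s ρ p = (RY P s ρ n).2 q + dlift (p - q) := by
          rw [phiF_eq hpR, Y_succ, if_neg h, dif_pos hex]
        have hphiq : phiF P s ρ q = (RY P s ρ n).2 q := phiF_eq hq.1
        refine ⟨m + 1, fun i => if i ≤ m then f i else phiF P s ρ p, ?_, ?_, ?_, ?_⟩
        · simpa using hf0
        · dsimp only
          rw [if_neg (by omega)]
        · intro i hi
          dsimp only
          by_cases him : i ≤ m
          · rw [if_pos him]; exact hfmem i him
          · rw [if_neg him]; exact Finset.mem_image.mpr ⟨p, hpP, rfl⟩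
        · intro i hi
          dsimp only
          by_cases him : i < m
          · rw [if_pos (le_of_lt him), if_pos (by omega)]
            exact hfstep i him
          · have hieq : i = m := by omega
            subst hieq
            rw [if_pos le_rfl, if_neg (by omega), hfm, sigF_eq hF hqP]
            rw [Real.dist_eq, hphip, hphiq]
            have hring : (RY P s ρ n).2 q - ((RY P s ρ n).2 q + dlift (p - q)) =
                -(dlift (p - q)) := by ring
            rw [hring, abs_neg, abs_dlift]
            calc ‖p - q‖ = dist p q := (dist_eq_norm p q).symm
              _ = dist q p := dist_comm p q
              _ ≤ ρ q := hq.2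

lemma line_feasible (hs : s ∈ P) (hF : Feasible P s ρ) :
    Feasible (P.image (phiF P s ρ)) 0 (sigF P s ρ) := by
  constructor
  · intro x hx
    obtain ⟨p, hp, rfl⟩ := Finset.mem_image.mp hx
    rw [sigF_eq hF hp]
    exact hF.1 p hp
  · intro x hx
    obtain ⟨p, hp, rfl⟩ := Finset.mem_image.mp hx
    obtain ⟨n, hn⟩ := reached hF hp
    exact line_path hs hF hn

lemma cost_line (α : ℝ) (hF : Feasible P s ρ) :
    cost α (P.image (phiF P s ρ)) (sigF P s ρ) = cost α P ρ := by
  have hinj : ∀ x ∈ P, ∀ y ∈ P, phiF P s ρ x = phiF P s ρ y → x = y :=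
    fun x hx y hy => phiF_inj hF hx hy
  rw [cost, cost, Finset.sum_image hinj]
  exact Finset.sum_congr rfl fun p hp => by rw [sigF_eq hF hp]

/-- Transfer of a feasible line assignment back to the circle. -/
lemma circle_of_line (α : ℝ) (hs : s ∈ P) (hF : Feasible P s ρ) {σ' : ℝ → ℝ}
    (hσ : Feasible (P.image (phiF P s ρ)) 0 σ') :
    ∃ ρ' : AddCircle (1:ℝ) → ℝ, Feasible P s ρ' ∧
      cost α P ρ' = cost α (P.image (phiF P s ρ)) σ' := by
  classical
  refine ⟨fun p => if p ∈ P then σ' (phiF P s ρ p) else 0, ⟨?_, ?_⟩, ?_⟩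
  · intro p hp
    dsimp only
    rw [if_pos hp]
    exact hσ.1 _ (Finset.mem_image.mpr ⟨p, hp, rfl⟩)
  · intro p hp
    obtain ⟨m, g, hg0, hgm, hgmem, hgstep⟩ :=
      hσ.2 (phiF P s ρ p) (Finset.mem_image.mpr ⟨p, hp, rfl⟩)
    set F : ℕ → AddCircle (1:ℝ) := fun i =>
      if h : ∃ q, q ∈ P ∧ phiF P s ρ q = g i then h.choose else s with hFdef
    have key : ∀ i ≤ m, F i ∈ P ∧ phiF P s ρ (F i) = g i := by
      intro i hi
      obtain ⟨q, hq, hq2⟩ := Finset.mem_image.mp (hgmem i hi)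
      have h : ∃ q, q ∈ P ∧ phiF P s ρ q = g i := ⟨q, hq, hq2⟩
      simp only [hFdef]
      rw [dif_pos h]
      exact h.choose_spec
    refine ⟨m, F, ?_, ?_, fun i hi => (key i hi).1, ?_⟩
    · have k := key 0 (Nat.zero_le m)
      have heq : phiF P s ρ (F 0) = phiF P s ρ s := by rw [k.2, hg0, phiF_s]
      exact phiF_inj hF k.1 hs heq
    · have k := key m le_rfl
      have heq : phiF P s ρ (F m) = phiF P s ρ p := by rw [k.2, hgm]
      exact phiF_inj hF k.1 hp heq
    · intro i hi
      have k1 := key i (le_of_lt hi)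
      have k2 := key (i+1) hi
      dsimp only
      rw [if_pos k1.1]
      calc dist (F i) (F (i+1)) ≤ |phiF P s ρ (F i) - phiF P s ρ (F (i+1))| :=
            phiF_dist hF k1.1 k2.1
        _ = dist (g i) (g (i+1)) := by rw [k1.2, k2.2, Real.dist_eq]
        _ ≤ σ' (g i) := hgstep i hi
        _ = σ' (phiF P s ρ (F i)) := by rw [k1.2]
  · have hinj : ∀ x ∈ P, ∀ y ∈ P, phiF P s ρ x = phiF P s ρ y → x = y :=
      fun x hx y hy => phiF_inj hF hx hy
    rw [cost, cost, Finset.sum_image hinj]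
    exact Finset.sum_congr rfl fun p hp => by simp only [if_pos hp]

/-- The constant-1 assignment is feasible on the circle of circumference 1. -/
lemma const_one_feasible {P : Finset (AddCircle (1:ℝ))} {s : AddCircle (1:ℝ)} (hs : s ∈ P) :
    Feasible P s (fun _ => (1:ℝ)) := by
  refine ⟨fun p _ => zero_le_one, fun p hp => ?_⟩
  refine ⟨1, fun i => if i = 0 then s else p, by simp, by simp, ?_, ?_⟩
  · intro i hi
    by_cases h : i = 0
    · simpa [h] using hs
    · simpa [h] using hp
  · intro i hi
    have hi0 : i = 0 := by omega
    subst hi0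
    dsimp only
    have e1 : (if (0:ℕ) = 0 then s else p) = s := if_pos rfl
    have e2 : (if (0:ℕ) + 1 = 0 then s else p) = p := if_neg (by omega)
    rw [e1, e2]
    have h1 : dist s p ≤ |(1:ℝ)| / 2 := by
      rw [dist_eq_norm]
      exact AddCircle.norm_le_half_period _ one_ne_zero
    simp only [abs_one] at h1
    linarith

/-- The optimum on the circle is attained. -/
lemma exists_opt (α : ℝ) (hα : 0 ≤ α) (P : Finset (AddCircle (1:ℝ)))
    (s : AddCircle (1:ℝ)) (hs : s ∈ P) :
    ∃ ρ : AddCircle (1:ℝ) → ℝ, Feasible P s ρ ∧ cost α P ρ = opt α P s := by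
  classical
  set D : Finset ℝ := (P ×ˢ P).image (fun pq => dist pq.1 pq.2) with hD
  set rA : (AddCircle (1:ℝ) → ℝ) → AddCircle (1:ℝ) → ℝ := fun ρ p =>
    if hp : p ∈ P ∧ 0 ≤ ρ p then
      ((P.filter fun q => dist p q ≤ ρ p).image fun q => dist p q).max'
        ⟨dist p p, Finset.mem_image.mpr ⟨p, Finset.mem_filter.mpr
          ⟨hp.1, by simp [hp.2]⟩, rfl⟩⟩
    else 0 with hrA
  have h_nonneg : ∀ ρ, ∀ p ∈ P, 0 ≤ ρ p → 0 ≤ rA ρ p := by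
    intro ρ p hp hρp
    rw [hrA]
    simp only
    rw [dif_pos ⟨hp, hρp⟩]
    have hm : dist p p ∈ (P.filter fun q => dist p q ≤ ρ p).image fun q => dist p q :=
      Finset.mem_image.mpr ⟨p, Finset.mem_filter.mpr ⟨hp, by simp [hρp]⟩, rfl⟩
    have := Finset.le_max' _ (dist p p) hm
    simpa [dist_self] using this
  have h_le : ∀ ρ, ∀ p ∈ P, 0 ≤ ρ p → rA ρ p ≤ ρ p := by
    intro ρ p hp hρp
    rw [hrA]; simp only; rw [dif_pos ⟨hp, hρp⟩]
    apply Finset.max'_le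
    intro x hx
    obtain ⟨q, hq, rfl⟩ := Finset.mem_image.mp hx
    exact (Finset.mem_filter.mp hq).2
  have h_memD : ∀ ρ, ∀ p ∈ P, 0 ≤ ρ p → rA ρ p ∈ D := by
    intro ρ p hp hρp
    rw [hrA]; simp only; rw [dif_pos ⟨hp, hρp⟩]
    have := Finset.max'_mem ((P.filter fun q => dist p q ≤ ρ p).image fun q => dist p q)
      ⟨dist p p, Finset.mem_image.mpr ⟨p, Finset.mem_filter.mpr
          ⟨hp, by simp [hρp]⟩, rfl⟩⟩
    obtain ⟨q, hq, hq2⟩ := Finset.mem_image.mp this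
    rw [← hq2, hD]
    exact Finset.mem_image.mpr ⟨(p, q),
      Finset.mem_product.mpr ⟨hp, (Finset.mem_filter.mp hq).1⟩, rfl⟩
  have h_feas : ∀ ρ, Feasible P s ρ → Feasible P s (rA ρ) := by
    intro ρ hF
    refine ⟨fun p hp => h_nonneg ρ p hp (hF.1 p hp), fun p hp => ?_⟩
    obtain ⟨m, f, h0, hm, hmem, hstep⟩ := hF.2 p hp
    refine ⟨m, f, h0, hm, hmem, fun i hi => ?_⟩
    have hfi : f i ∈ P := hmem i (le_of_lt hi)
    have hfi1 : f (i+1) ∈ P := hmem (i+1) hi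
    rw [hrA]; simp only; rw [dif_pos ⟨hfi, hF.1 _ hfi⟩]
    apply Finset.le_max'
    exact Finset.mem_image.mpr ⟨f (i+1), Finset.mem_filter.mpr ⟨hfi1, hstep i hi⟩, rfl⟩
  have h_cost : ∀ ρ, Feasible P s ρ → cost α P (rA ρ) ≤ cost α P ρ := by
    intro ρ hF
    apply Finset.sum_le_sum
    intro p hp
    exact Real.rpow_le_rpow (h_nonneg ρ p hp (hF.1 p hp)) (h_le ρ p hp (hF.1 p hp)) hα
  -- the finite set of candidate costs
  set T : Set ℝ := (fun g : ↥P → ℝ => ∑ p ∈ P.attach, g p ^ α) ''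
    (Set.pi Set.univ fun _ : ↥P => (D : Set ℝ)) with hT
  have hTfin : T.Finite := (Set.Finite.pi fun _ => D.finite_toSet).image _
  have h_costT : ∀ ρ, Feasible P s ρ → cost α P (rA ρ) ∈ T := by
    intro ρ hF
    refine ⟨fun p : ↥P => rA ρ ↑p, ?_, ?_⟩
    · intro i _
      exact h_memD ρ ↑i i.2 (hF.1 ↑i i.2)
    · rw [cost]
      exact Finset.sum_attach P (fun p => rA ρ p ^ α)
  set S : Set ℝ := {c | ∃ ρ, Feasible P s ρ ∧ cost α P ρ = c} with hS
  have hbddS : BddBelow S := by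
    refine ⟨0, fun c hc => ?_⟩
    obtain ⟨ρ, hF, rfl⟩ := hc
    exact Finset.sum_nonneg fun p hp => Real.rpow_nonneg (hF.1 p hp) α
  have hF1 : Feasible P s (fun _ => (1:ℝ)) := const_one_feasible hs
  have hS'ne : (S ∩ T).Nonempty :=
    ⟨cost α P (rA (fun _ => 1)), ⟨rA (fun _ => 1), h_feas _ hF1, rfl⟩, h_costT _ hF1⟩
  have hS'fin : (S ∩ T).Finite := hTfin.subset Set.inter_subset_right
  have hc := hS'ne.csInf_mem hS'fin
  obtain ⟨⟨ρstar, hρstar, hcoststar⟩, _⟩ := hc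
  refine ⟨ρstar, hρstar, ?_⟩
  have h1 : sInf S ≤ sInf (S ∩ T) := by
    apply csInf_le hbddS
    rw [← hcoststar]
    exact ⟨ρstar, hρstar, rfl⟩
  have h2 : sInf (S ∩ T) ≤ sInf S := by
    refine le_csInf ⟨cost α P (fun _ => 1), ⟨fun _ => 1, hF1, rfl⟩⟩ ?_
    intro b hb
    obtain ⟨ρ, hF, rfl⟩ := hb
    calc sInf (S ∩ T) ≤ cost α P (rA ρ) :=
          csInf_le hS'fin.bddBelow ⟨⟨rA ρ, h_feas ρ hF, rfl⟩, h_costT ρ hF⟩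
      _ ≤ cost α P ρ := h_cost ρ hF
  rw [hcoststar, opt]
  exact le_antisymm h2 h1

end CutCircle

theorem cut_circle_optimal (α : ℝ) (hα : 1 < α)
    (P : Finset (AddCircle (1:ℝ))) (s : AddCircle (1:ℝ)) (hs : s ∈ P) :
    ∃ φ : AddCircle (1:ℝ) → ℝ, φ s = 0 ∧
      (∀ p ∈ P, ∀ q ∈ P, dist p q ≤ |φ p - φ q|) ∧
      opt α P s = opt α (P.image φ) 0 := by
  classical
  obtain ⟨ρstar, hfeas, hcost⟩ :=
    CutCircle.exists_opt α (le_of_lt (lt_trans zero_lt_one hα)) P s hs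
  refine ⟨CutCircle.phiF P s ρstar, CutCircle.phiF_s,
    fun p hp q hq => CutCircle.phiF_dist hfeas hp hq, ?_⟩
  have hbddS : BddBelow {c : ℝ | ∃ ρ : AddCircle (1:ℝ) → ℝ, Feasible P s ρ ∧ cost α P ρ = c} := by
    refine ⟨0, fun c hc => ?_⟩
    obtain ⟨ρ, hF, rfl⟩ := hc
    exact Finset.sum_nonneg fun p hp => Real.rpow_nonneg (hF.1 p hp) α
  have hbddT : BddBelow {c : ℝ | ∃ σ : ℝ → ℝ,
      Feasible (P.image (CutCircle.phiF P s ρstar)) 0 σ ∧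
      cost α (P.image (CutCircle.phiF P s ρstar)) σ = c} := by
    refine ⟨0, fun c hc => ?_⟩
    obtain ⟨σ, hF, rfl⟩ := hc
    exact Finset.sum_nonneg fun x hx => Real.rpow_nonneg (hF.1 x hx) α
  have hmemT : cost α (P.image (CutCircle.phiF P s ρstar)) (CutCircle.sigF P s ρstar) ∈
      {c : ℝ | ∃ σ : ℝ → ℝ, Feasible (P.image (CutCircle.phiF P s ρstar)) 0 σ ∧
        cost α (P.image (CutCircle.phiF P s ρstar)) σ = c} :=
    ⟨CutCircle.sigF P s ρstar, CutCircle.line_feasible hs hfeas, rfl⟩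
  apply le_antisymm
  · -- opt circle ≤ opt line
    apply csInf_le_csInf hbddS ⟨_, hmemT⟩
    intro c hc
    obtain ⟨σ', hσ', rfl⟩ := hc
    obtain ⟨ρ', hρ', hcost'⟩ := CutCircle.circle_of_line α hs hfeas hσ'
    exact ⟨ρ', hρ', hcost'⟩
  · -- opt line ≤ opt circle
    calc opt α (P.image (CutCircle.phiF P s ρstar)) 0
        ≤ cost α (P.image (CutCircle.phiF P s ρstar)) (CutCircle.sigF P s ρstar) :=
          csInf_le hbddT hmemT
      _ = cost α P ρstar := CutCircle.cost_line α hfeas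
      _ = opt α P s := hcost
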